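/- Let X be a nonempty perfect Polish space and let E be an equivalence relation on X with all classes countable, which is σ-compact as a subset of X × X, and all of whose classes are dense in X. Then E admits no σ-compact transversal; that is, there is no σ-compact set T ⊆ X meeting every E-class in exactly one point. -/

import Mathlib

lemma sigma_inter_closed {X : Type*} [TopologicalSpace X] {s t : Set X}
    (hs : IsSigmaCompact s) (ht : IsClosed t) : IsSigmaCompact (s ∩ t) := by
  obtain ⟨K, hK, rfl⟩ := hs
  rw [Set.iUnion_inter]
  exact isSigmaCompact_iUnion_of_isCompact _ fun n => (hK n).inter_right ht

/-- A σ-compact countable equivalence relation with dense classes on a nonempty perfect Polish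
space admits no σ-compact transversal. -/
theorem stmt_5 {X : Type*} [TopologicalSpace X] [PolishSpace X] [Nonempty X]
    (hperf : Perfect (Set.univ : Set X))
    (E : X → X → Prop) (hE : Equivalence E)
    (hcount : ∀ x : X, {y : X | E x y}.Countable)
    (hσ : IsSigmaCompact {p : X × X | E p.1 p.2})
    (hdense : ∀ x : X, Dense {y : X | E x y}) :
    ¬ ∃ T : Set X, IsSigmaCompact T ∧ ∀ x : X, ∃! t : X, t ∈ T ∧ E x t := by
  letI := TopologicalSpace.upgradeIsCompletelyMetrizable X
  rintro ⟨T, hTσ, hTuniq⟩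
  -- singletons have empty interior
  have hsing : ∀ y : X, interior ({y} : Set X) = ∅ := by
    intro y
    by_contra h
    obtain ⟨x, hx⟩ := Set.nonempty_iff_ne_empty.mpr h
    have hxy : x = y := Set.mem_singleton_iff.mp (interior_subset hx)
    subst hxy
    have hacc := hperf.acc x (Set.mem_univ x)
    rw [accPt_iff_nhds] at hacc
    obtain ⟨z, hz, hzx⟩ := hacc {x} (mem_interior_iff_mem_nhds.mp hx)
    exact hzx (Set.mem_singleton_iff.mp hz.1)
  -- pick a basepoint in T
  obtain ⟨x₀⟩ := ‹Nonempty X›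
  obtain ⟨t₂, ⟨ht₂T, ht₂E⟩, ht₂u⟩ := hTuniq x₀
  -- T minus the point t₂ is σ-compact
  have hT' : IsSigmaCompact (T \ {t₂}) := by
    have : T \ {t₂} = ⋃ n : ℕ, T ∩ {x | 1 / ((n : ℝ) + 1) ≤ dist x t₂} := by
      ext x
      simp only [Set.mem_diff, Set.mem_singleton_iff, Set.mem_iUnion, Set.mem_inter_iff,
        Set.mem_setOf_eq]
      constructor
      · rintro ⟨hxT, hx⟩
        have hd : 0 < dist x t₂ := dist_pos.mpr hx
        obtain ⟨n, hn⟩ := exists_nat_one_div_lt hd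
        exact ⟨n, hxT, le_of_lt hn⟩
      · rintro ⟨n, hxT, hx⟩
        refine ⟨hxT, fun h => ?_⟩
        subst h
        simp only [dist_self] at hx
        have : (0 : ℝ) < 1 / ((n : ℝ) + 1) := by positivity
        linarith
    rw [this]
    refine isSigmaCompact_iUnion _ fun n => sigma_inter_closed hTσ ?_
    exact isClosed_le continuous_const (continuous_id.dist continuous_const)
  -- the saturation of T \ {t₂}
  set S : Set X := Prod.fst '' ({p : X × X | E p.1 p.2} ∩ (Set.univ ×ˢ (T \ {t₂}))) with hSdef
  have hSmem : ∀ x, x ∈ S ↔ ∃ t, t ∈ T ∧ t ≠ t₂ ∧ E x t := by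
    intro x
    constructor
    · rintro ⟨⟨a, b⟩, ⟨hab, -, hb⟩, rfl⟩
      exact ⟨b, hb.1, hb.2, hab⟩
    · rintro ⟨t, hT, ht, hEx⟩
      exact ⟨(x, t), ⟨hEx, Set.mem_univ _, hT, ht⟩, rfl⟩
  -- S is σ-compact
  have hSσ : IsSigmaCompact S := by
    obtain ⟨K, hK, hKU⟩ := hT'
    have : S = ⋃ n, Prod.fst '' ({p : X × X | E p.1 p.2} ∩ (Set.univ ×ˢ K n)) := by
      rw [hSdef, ← hKU, Set.prod_iUnion, Set.inter_iUnion, Set.image_iUnion]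
    rw [this]
    refine isSigmaCompact_iUnion _ fun n => ?_
    refine IsSigmaCompact.image continuous_fst ?_
    exact sigma_inter_closed hσ (isClosed_univ.prod (hK n).isClosed)
  -- t₂ ∉ S
  have ht₂S : t₂ ∉ S := by
    rw [hSmem]
    rintro ⟨t, hT, ht, hEx⟩
    exact ht (ht₂u t ⟨hT, hE.trans ht₂E hEx⟩)
  -- S is saturated
  have hSsat : ∀ x y, x ∈ S → E x y → y ∈ S := by
    intro x y hx hxy
    rw [hSmem] at hx ⊢
    obtain ⟨t, hT, ht, hEx⟩ := hx
    exact ⟨t, hT, ht, hE.trans (hE.symm hxy) hEx⟩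
  -- S is meagre
  have hSmeagre : IsMeagre S := by
    obtain ⟨K, hK, hKU⟩ := hSσ
    rw [← hKU]
    refine isMeagre_iUnion fun n => ?_
    have hnd : IsNowhereDense (K n) := by
      rw [(hK n).isClosed.isNowhereDense_iff]
      by_contra h
      obtain ⟨u, hu⟩ := Set.nonempty_iff_ne_empty.mpr h
      -- the class of t₂ is dense, so it meets interior (K n) ⊆ S
      obtain ⟨y, hyE, hyK⟩ := (hdense t₂).exists_mem_open isOpen_interior ⟨u, hu⟩
      have hyS : y ∈ S := by
        rw [← hKU]
        exact Set.mem_iUnion.mpr ⟨n, interior_subset hyK⟩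
      exact ht₂S (hSsat y t₂ hyS (hE.symm hyE))
    rw [IsMeagre]
    have : IsOpen (K n)ᶜ ∧ Dense (K n)ᶜ :=
      isClosed_isNowhereDense_iff_compl.mp ⟨(hK n).isClosed, hnd⟩
    exact residual_of_dense_open this.1 this.2
  -- the class of t₂ is meagre
  set C : Set X := {y | E t₂ y} with hCdef
  have hCmeagre : IsMeagre C := by
    rw [isMeagre_iff_countable_union_isNowhereDense]
    refine ⟨(fun y => ({y} : Set X)) '' C, ?_, (hcount t₂).image _, ?_⟩
    · rintro t ⟨y, -, rfl⟩
      rw [IsNowhereDense, closure_singleton]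
      exact hsing y
    · intro y hy
      exact Set.mem_sUnion.mpr ⟨{y}, ⟨y, hy, rfl⟩, rfl⟩
  -- X = S ∪ C
  have hcover : (Set.univ : Set X) ⊆ S ∪ C := by
    intro x _
    obtain ⟨t, ⟨hT, hEx⟩, -⟩ := hTuniq x
    by_cases ht : t = t₂
    · subst ht
      exact Or.inr (hE.symm hEx)
    · exact Or.inl ((hSmem x).mpr ⟨t, hT, ht, hEx⟩)
  -- contradiction with Baire
  have huniv : IsMeagre (Set.univ : Set X) := by
    refine IsMeagre.mono hcover ?_
    rw [IsMeagre, Set.compl_union]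
    exact Filter.inter_mem hSmeagre hCmeagre
  rw [IsMeagre, Set.compl_univ] at huniv
  have := dense_of_mem_residual huniv
  obtain ⟨x⟩ := ‹Nonempty X›
  exact (this.exists_mem_open isOpen_univ ⟨x, trivial⟩).elim (fun y hy => hy.1)
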